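/- MacWilliams equations: let F be a finite field with q elements and let C be an F-linear subspace of Fⁿ. Let C^⊥ = {x ∈ Fⁿ : ∑_{i} x_i·c_i = 0 for all c ∈ C} be the dual code with respect to the standard dot product, and for a code D let A_i(D) denote the number of codewords of D of Hamming weight i. Then for every j with 0 ≤ j ≤ n: |C| · A_j(C^⊥) = ∑_{i=0}^{n} K_j^{n,q}(i) · A_i(C), where K_j^{n,q}(x) = ∑_{l=0}^{j} (−1)^l (q−1)^{j−l} · binom(x, l) · binom(n−x, j−l) is the Krawtchouk polynomial (here binom denotes the binomial coefficient, evaluated at the integer x). -/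

import Mathlib

/-- The number of codewords of Hamming weight `i` in a code `D ⊆ Fⁿ`. -/
noncomputable def weightCount {F : Type*} [Fintype F] [DecidableEq F] [Zero F] {n : ℕ}
    (D : Set (Fin n → F)) (i : ℕ) : ℕ :=
  Nat.card {x : Fin n → F // x ∈ D ∧ hammingNorm x = i}

/-- The dual code of `C ⊆ Fⁿ` with respect to the standard dot product, as a set. -/
def dualCode {F : Type*} [CommRing F] {n : ℕ} (C : Submodule F (Fin n → F)) :
    Set (Fin n → F) :=
  {x : Fin n → F | ∀ c ∈ C, ∑ i, x i * c i = 0}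

/-- The Krawtchouk polynomial `K_j^{n,q}` evaluated at the integer `i`. -/
def krawtchouk (n q j i : ℕ) : ℤ :=
  ∑ l ∈ Finset.range (j + 1),
    (-1) ^ l * ((q : ℤ) - 1) ^ (j - l) * (i.choose l : ℤ) * ((n - i).choose (j - l) : ℤ)

open Finset

section Aux

private lemma addChar_map_sum' {A M : Type*} [AddCommMonoid A] [CommMonoid M] (ψ : AddChar A M)
    {ι : Type*} (s : Finset ι) (f : ι → A) :
    ψ (∑ i ∈ s, f i) = ∏ i ∈ s, ψ (f i) := by
  induction s using Finset.cons_induction with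
  | empty => simp
  | cons a s ha ih => simp [Finset.sum_cons, Finset.prod_cons, AddChar.map_add_eq_mul, ih]

variable {F : Type*} [Field F] [Fintype F] [DecidableEq F]

private lemma sum_char_nonzero (χ : AddChar F ℂ) (hχ : χ.IsPrimitive) (c : F) :
    ∑ a ∈ univ.erase (0 : F), χ (a * c) =
      if c = 0 then ((Fintype.card F : ℂ) - 1) else -1 := by
  have h := AddChar.sum_mulShift c hχ
  have h0 : ∑ a : F, χ (a * c) = χ (0 * c) + ∑ a ∈ univ.erase (0 : F), χ (a * c) :=
    (Finset.add_sum_erase _ _ (mem_univ 0)).symm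
  rw [h] at h0
  simp only [zero_mul, AddChar.map_zero_eq_one] at h0
  split_ifs with hc
  · rw [if_pos hc] at h0; linear_combination -h0
  · rw [if_neg hc] at h0; linear_combination -h0

private lemma fiber_card {n : ℕ} (T : Finset (Fin n)) (j l : ℕ) (hl : l ≤ j) :
    ((powersetCard j (univ : Finset (Fin n))).filter (fun S => (S ∩ T).card = l)).card
      = T.card.choose l * (n - T.card).choose (j - l) := by
  have hTc : Tᶜ.card = n - T.card := by
    rw [Finset.card_compl, Fintype.card_fin]
  rw [← Finset.card_powersetCard l T, ← hTc, ← Finset.card_powersetCard (j - l) Tᶜ,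
    ← Finset.card_product]
  apply Finset.card_nbij' (i := fun S => (S ∩ T, S \ T)) (j := fun p => p.1 ∪ p.2)
  · intro S hS
    simp only [mem_coe, mem_filter, mem_powersetCard] at hS
    obtain ⟨⟨-, hcard⟩, hint⟩ := hS
    simp only [mem_coe, mem_product, mem_powersetCard]
    refine ⟨⟨inter_subset_right, hint⟩, ?_, ?_⟩
    · intro i hi
      simp only [mem_sdiff] at hi
      simp [mem_compl, hi.2]
    · have := Finset.card_inter_add_card_sdiff S T
      omega
  · rintro ⟨A, B⟩ hp
    simp only [mem_coe, mem_product, mem_powersetCard] at hp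
    obtain ⟨⟨hAT, hA⟩, hBT, hB⟩ := hp
    have hdisj : Disjoint A B := by
      apply Finset.disjoint_left.2
      intro a haA haB
      exact (Finset.mem_compl.1 (hBT haB)) (hAT haA)
    have hBTd : Disjoint B T := by
      apply Finset.disjoint_left.2
      intro a haB haT
      exact (Finset.mem_compl.1 (hBT haB)) haT
    simp only [mem_coe, mem_filter, mem_powersetCard]
    refine ⟨⟨subset_univ _, ?_⟩, ?_⟩
    · rw [Finset.card_union_of_disjoint hdisj, hA, hB]; omega
    · rw [Finset.union_inter_distrib_right, Finset.inter_eq_left.2 hAT,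
        (Finset.disjoint_iff_inter_eq_empty.1 hBTd), Finset.union_empty, hA]
  · intro S hS
    dsimp only; rw [Finset.union_comm, Finset.sdiff_union_inter]
  · rintro ⟨A, B⟩ hp
    simp only [mem_coe, mem_product, mem_powersetCard] at hp
    obtain ⟨⟨hAT, hA⟩, hBT, hB⟩ := hp
    have hBTd : B ∩ T = ∅ := by
      rw [← Finset.disjoint_iff_inter_eq_empty, Finset.disjoint_left]
      intro a haB haT
      exact (Finset.mem_compl.1 (hBT haB)) haT
    have h1 : (A ∪ B) ∩ T = A := by
      rw [Finset.union_inter_distrib_right, Finset.inter_eq_left.2 hAT, hBTd, Finset.union_empty]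
    have h2 : (A ∪ B) \ T = B := by
      rw [Finset.union_sdiff_distrib, Finset.sdiff_eq_empty_iff_subset.2 hAT,
        Finset.empty_union, Finset.sdiff_eq_self_iff_disjoint.2 ?_]
      rw [Finset.disjoint_left]
      intro a haB haT
      exact (Finset.mem_compl.1 (hBT haB)) haT
    simp [h1, h2]

private lemma key_charsum {n : ℕ} (χ : AddChar F ℂ) (hχ : χ.IsPrimitive) (j : ℕ)
    (c : Fin n → F) :
    ∑ x ∈ univ.filter (fun x : Fin n → F => hammingNorm x = j), χ (∑ i, x i * c i) =
      (krawtchouk n (Fintype.card F) j (hammingNorm c) : ℂ) := by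
  set T : Finset (Fin n) := univ.filter (fun i => c i ≠ 0) with hT
  have hTcard : T.card = hammingNorm c := rfl
  rw [← Finset.sum_fiberwise_of_maps_to (g := fun x : Fin n → F => univ.filter (fun i => x i ≠ 0))
      (t := powersetCard j univ)
      (fun x hx => by
        simp only [mem_filter, mem_univ, true_and] at hx
        simpa [mem_powersetCard, hammingNorm] using hx)]
  have hinner : ∀ S ∈ powersetCard j (univ : Finset (Fin n)),
      ∑ x ∈ (univ.filter (fun x : Fin n → F => hammingNorm x = j)).filter
          (fun x => univ.filter (fun i => x i ≠ 0) = S), χ (∑ i, x i * c i)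
        = ((Fintype.card F : ℂ) - 1) ^ (j - (S ∩ T).card) * (-1) ^ (S ∩ T).card := by
    intro S hS
    rw [mem_powersetCard] at hS
    have hfil : (univ.filter (fun x : Fin n → F => hammingNorm x = j)).filter
          (fun x => univ.filter (fun i => x i ≠ 0) = S)
        = Fintype.piFinset (fun i => if i ∈ S then univ.erase (0 : F) else {0}) := by
      ext x
      simp only [mem_filter, mem_univ, true_and, Fintype.mem_piFinset]
      constructor
      · rintro ⟨hwt, hsupp⟩ i
        by_cases hi : i ∈ S
        · simp only [hi, if_pos]
          rw [← hsupp] at hi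
          simp only [mem_filter] at hi
          simp [hi.2]
        · simp only [hi, if_neg, not_false_iff, mem_singleton]
          rw [← hsupp] at hi
          simp only [mem_filter, mem_univ, true_and] at hi
          push_neg at hi
          exact hi
      · intro h
        have hsupp : univ.filter (fun i => x i ≠ 0) = S := by
          ext i
          simp only [mem_filter, mem_univ, true_and]
          constructor
          · intro hxi
            by_contra hi
            have := h i
            rw [if_neg hi, mem_singleton] at this
            exact hxi this
          · intro hi
            have := h i
            rw [if_pos hi] at this
            exact (Finset.mem_erase.1 this).1
        refine ⟨?_, hsupp⟩
        show (univ.filter (fun i => x i ≠ 0)).card = j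
        rw [hsupp, hS.2]
    rw [hfil]
    have := Finset.prod_univ_sum (fun i : Fin n => if i ∈ S then univ.erase (0 : F) else {0})
      (fun i a => χ (a * c i))
    rw [Finset.sum_congr rfl (fun x _ => addChar_map_sum' χ univ (fun i => x i * c i)), ← this]
    have hfac : ∀ i : Fin n,
        (∑ a ∈ (if i ∈ S then univ.erase (0 : F) else {0}), χ (a * c i))
          = if i ∈ S then (if c i = 0 then ((Fintype.card F : ℂ) - 1) else -1) else 1 := by
      intro i
      by_cases hi : i ∈ S
      · rw [if_pos hi, if_pos hi, sum_char_nonzero χ hχ]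
      · rw [if_neg hi, if_neg hi]
        simp
    rw [Finset.prod_congr rfl (fun i _ => hfac i), Finset.prod_ite_mem, univ_inter,
      Finset.prod_ite, Finset.prod_const, Finset.prod_const]
    have h1 : S.filter (fun i => ¬ c i = 0) = S ∩ T := by
      rw [hT]; ext i; simp [and_comm]
    have h2 : (S.filter (fun i => c i = 0)).card = j - (S ∩ T).card := by
      have := Finset.card_filter_add_card_filter_not (s := S) (p := fun i => c i = 0)
      rw [h1] at this
      omega
    rw [h1, h2]
  rw [Finset.sum_congr rfl hinner]
  rw [← Finset.sum_fiberwise_of_maps_to (g := fun S : Finset (Fin n) => (S ∩ T).card)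
      (t := range (j + 1))
      (fun S hS => by
        rw [mem_powersetCard] at hS
        rw [mem_range]
        have h1 : (S ∩ T).card ≤ S.card := Finset.card_le_card Finset.inter_subset_left
        have h2 := hS.2
        show (S ∩ T).card < j + 1
        omega)]
  unfold krawtchouk
  push_cast
  refine Finset.sum_congr rfl (fun l hl => ?_)
  rw [mem_range] at hl
  have hfix : ∀ S ∈ (powersetCard j (univ : Finset (Fin n))).filter
      (fun S => (S ∩ T).card = l),
      ((Fintype.card F : ℂ) - 1) ^ (j - (S ∩ T).card) * (-1) ^ (S ∩ T).card
        = ((Fintype.card F : ℂ) - 1) ^ (j - l) * (-1) ^ l := by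
    intro S hS
    rw [mem_filter] at hS
    rw [hS.2]
  rw [Finset.sum_congr rfl hfix, Finset.sum_const, fiber_card T j l (by omega), hTcard]
  ring

open scoped Classical in
private lemma sum_over_code {n : ℕ} (χ : AddChar F ℂ) (hχ : χ.IsPrimitive)
    (C : Submodule F (Fin n → F)) [Fintype C] (x : Fin n → F) :
    ∑ c : C, χ (∑ i, x i * (c : Fin n → F) i) =
      if x ∈ dualCode C then (Nat.card C : ℂ) else 0 := by
  let φ : C →+ F :=
    { toFun := fun c => ∑ i, x i * (c : Fin n → F) i
      map_zero' := by simp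
      map_add' := by
        intro a b
        simp [mul_add, Finset.sum_add_distrib] }
  split_ifs with hx
  · have h1 : ∀ c : C, χ (∑ i, x i * (c : Fin n → F) i) = 1 := by
      intro c
      rw [hx c c.2, AddChar.map_zero_eq_one]
    rw [Finset.sum_congr rfl (fun c _ => h1 c), Finset.sum_const, Nat.card_eq_fintype_card]
    simp
  · obtain ⟨c₀, hc₀C, hc₀⟩ : ∃ c ∈ C, ∑ i, x i * c i ≠ 0 := by
      simpa [dualCode] using hx
    have hs := hχ hc₀
    obtain ⟨t, ht⟩ := AddChar.ne_one_iff.1 hs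
    have hval : φ (⟨t • c₀, C.smul_mem t hc₀C⟩ : C) = (∑ i, x i * c₀ i) * t := by
      show (∑ i, x i * (t • c₀) i) = (∑ i, x i * c₀ i) * t
      rw [Finset.sum_mul]
      refine Finset.sum_congr rfl (fun i _ => ?_)
      simp only [Pi.smul_apply, smul_eq_mul]
      ring
    have hne : (χ.compAddMonoidHom φ) ≠ 1 := by
      intro h
      apply ht
      have h2 := DFunLike.congr_fun h (⟨t • c₀, C.smul_mem t hc₀C⟩ : C)
      simp only [AddChar.compAddMonoidHom_apply, AddChar.one_apply] at h2
      rw [AddChar.mulShift_apply, ← hval]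
      exact h2
    have h0 := AddChar.sum_eq_zero_of_ne_one hne
    exact h0

end Aux

/-- MacWilliams equations: for a linear code `C ⊆ Fⁿ` over a finite field `F` with `q`
elements and every `0 ≤ j ≤ n`,
`|C| · A_j(C^⊥) = ∑_{i=0}^{n} K_j^{n,q}(i) · A_i(C)`. -/
theorem macwilliams_equations {F : Type*} [Field F] [Fintype F] [DecidableEq F]
    {n q : ℕ} (hq : q = Fintype.card F)
    (C : Submodule F (Fin n → F)) (j : ℕ) (hj : j ≤ n) :
    (Nat.card C : ℤ) * (weightCount (dualCode C) j : ℤ) =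
      ∑ i ∈ Finset.range (n + 1), krawtchouk n q j i * (weightCount (C : Set (Fin n → F)) i : ℤ) := by
  classical
  subst hq
  haveI : Fintype C := Fintype.ofFinite _
  set χ : AddChar F ℂ := AddChar.FiniteField.primitiveChar_to_Complex F with hχdef
  have hχ : χ.IsPrimitive := AddChar.FiniteField.primitiveChar_to_Complex_isPrimitive F
  have main : ((Nat.card C : ℂ) * (weightCount (dualCode C) j : ℂ)) =
      ∑ i ∈ Finset.range (n + 1),
        (krawtchouk n (Fintype.card F) j i : ℂ) * (weightCount (C : Set (Fin n → F)) i : ℂ) := by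
    have hcard : ((univ.filter (fun x : Fin n → F => hammingNorm x = j)).filter
        (fun x => x ∈ dualCode C)).card = weightCount (dualCode C) j := by
      rw [weightCount, Nat.card_eq_fintype_card, Fintype.card_subtype, Finset.filter_filter]
      congr 1
      exact Finset.filter_congr (fun x _ => by tauto)
    calc (Nat.card C : ℂ) * (weightCount (dualCode C) j : ℂ)
        = ∑ x ∈ univ.filter (fun x : Fin n → F => hammingNorm x = j),
            (if x ∈ dualCode C then (Nat.card C : ℂ) else 0) := by
          rw [← Finset.sum_filter, Finset.sum_const, ← hcard]
          rw [nsmul_eq_mul]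
          ring
      _ = ∑ x ∈ univ.filter (fun x : Fin n → F => hammingNorm x = j),
            ∑ c : C, χ (∑ i, x i * (c : Fin n → F) i) :=
          Finset.sum_congr rfl (fun x _ => (sum_over_code χ hχ C x).symm)
      _ = ∑ c : C, ∑ x ∈ univ.filter (fun x : Fin n → F => hammingNorm x = j),
            χ (∑ i, x i * (c : Fin n → F) i) := Finset.sum_comm
      _ = ∑ c : C, (krawtchouk n (Fintype.card F) j (hammingNorm (c : Fin n → F)) : ℂ) :=
          Finset.sum_congr rfl (fun c _ => key_charsum χ hχ j (c : Fin n → F))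
      _ = ∑ i ∈ Finset.range (n + 1),
            ∑ c ∈ univ.filter (fun c : C => hammingNorm (c : Fin n → F) = i),
            (krawtchouk n (Fintype.card F) j (hammingNorm (c : Fin n → F)) : ℂ) :=
          (Finset.sum_fiberwise_of_maps_to (fun c _ => by
            rw [mem_range]
            have := hammingNorm_le_card_fintype (x := (c : Fin n → F))
            rw [Fintype.card_fin] at this
            omega) _).symm
      _ = ∑ i ∈ Finset.range (n + 1),
            (krawtchouk n (Fintype.card F) j i : ℂ) * (weightCount (C : Set (Fin n → F)) i : ℂ) := by
          refine Finset.sum_congr rfl (fun i _ => ?_)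
          have hc : ∀ c ∈ univ.filter (fun c : C => hammingNorm (c : Fin n → F) = i),
              (krawtchouk n (Fintype.card F) j (hammingNorm (c : Fin n → F)) : ℂ)
                = (krawtchouk n (Fintype.card F) j i : ℂ) := by
            intro c hc
            rw [mem_filter] at hc
            rw [hc.2]
          rw [Finset.sum_congr rfl hc, Finset.sum_const]
          have hwc : (univ.filter (fun c : C => hammingNorm (c : Fin n → F) = i)).card
              = weightCount (C : Set (Fin n → F)) i := by
            rw [weightCount, Nat.card_eq_fintype_card, ← Fintype.card_subtype]
            exact Fintype.card_congr
              (Equiv.subtypeSubtypeEquivSubtypeInter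
                (fun x : Fin n → F => x ∈ C) (fun x => hammingNorm x = i))
          rw [hwc, nsmul_eq_mul]
          ring
  exact_mod_cast main
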